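/- Let n ≥ 1, k ∈ ℕ, and t ∈ ℝ with |t| ≥ 1/2. For every Schwartz function u on ℝ^n, setting ũ(z) = e^{−i|z|²/(4t)} u(z), one has the exact equality of module regularity norms ‖u‖_{W^k_{M_t}} = ‖ũ‖_{W^k_{M_{t,0}}}. -/

import Mathlib

open MeasureTheory Complex Filter
open scoped ContDiff

noncomputable section

abbrev Eucl (n : ℕ) := EuclideanSpace ℝ (Fin n)

/-- Partial derivative in the `j`-th coordinate direction. -/
def pd {n : ℕ} (j : Fin n) (u : Eucl n → ℂ) : Eucl n → ℂ :=
  fun z => fderiv ℝ u z (EuclideanSpace.single j 1)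

/-- `D_{z_j} = -i ∂_{z_j}`. -/
def Dop {n : ℕ} (j : Fin n) (u : Eucl n → ℂ) : Eucl n → ℂ :=
  fun z => -Complex.I * pd j u z

/-- Index type for the modules `M_t`, `M_{t,0}`, `𝒩`. -/
abbrev MIdx (n : ℕ) := Unit ⊕ (Fin n × Fin n) ⊕ Fin n ⊕ Fin n

/-- Generators of the module `M_t` (for `|t| ≥ 1/2`): identity,
rotations `z_j D_{z_i} - z_i D_{z_j}`, `2t D_{z_j} - z_j`, and `D_{z_j}`. -/
def Mgen {n : ℕ} (t : ℝ) : MIdx n → (Eucl n → ℂ) → (Eucl n → ℂ)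
  | Sum.inl _ => id
  | Sum.inr (Sum.inl (i, j)) => fun u z => (z j : ℂ) * Dop i u z - (z i : ℂ) * Dop j u z
  | Sum.inr (Sum.inr (Sum.inl j)) => fun u z => 2 * (t : ℂ) * Dop j u z - (z j : ℂ) * u z
  | Sum.inr (Sum.inr (Sum.inr j)) => fun u => Dop j u

/-- Generators of the module `M_{t,0}` (for `|t| ≥ 1/2`): identity,
rotations `z_j D_{z_i} - z_i D_{z_j}`, `2t D_{z_j}`, and `D_{z_j} + z_j/(2t)`. -/
def M0gen {n : ℕ} (t : ℝ) : MIdx n → (Eucl n → ℂ) → (Eucl n → ℂ)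
  | Sum.inl _ => id
  | Sum.inr (Sum.inl (i, j)) => fun u z => (z j : ℂ) * Dop i u z - (z i : ℂ) * Dop j u z
  | Sum.inr (Sum.inr (Sum.inl j)) => fun u z => 2 * (t : ℂ) * Dop j u z
  | Sum.inr (Sum.inr (Sum.inr j)) => fun u z => Dop j u z + ((z j : ℂ) / (2 * (t : ℂ))) * u z

/-- For `|t| < 1/2` the modules are defined with `t` replaced by `t+1`. -/
def tEff (t : ℝ) : ℝ := if 1/2 ≤ |t| then t else t + 1

/-- Apply an ordered tuple of generators `A₁ ⋯ A_k` to `u`. -/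
def applyTuple {X ι : Type*} (gen : ι → (X → ℂ) → (X → ℂ)) {k : ℕ}
    (A : Fin k → ι) (u : X → ℂ) : X → ℂ :=
  (List.ofFn fun i => gen (A i)).foldr (fun f v => f v) u

/-- The module regularity norm `‖u‖_{W^k}` with respect to a generating family `gen`:
square root of the sum of `‖A₁⋯A_k u‖²_{L²}` over all ordered `k`-tuples. -/
def Wnorm {n : ℕ} {ι : Type*} [Fintype ι] (gen : ι → (Eucl n → ℂ) → (Eucl n → ℂ))
    (k : ℕ) (u : Eucl n → ℂ) : ℝ :=
  Real.sqrt (∑ A : Fin k → ι, ((eLpNorm (applyTuple gen A u) 2 volume).toReal) ^ 2)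

/-! ### Auxiliary development -/

/-- The gauge factor `φ_t(z) = e^{-i‖z‖²/(4t)}`. -/
def phiG {n : ℕ} (t : ℝ) (z : Eucl n) : ℂ :=
  Complex.exp (-Complex.I * ((‖z‖ ^ 2 / (4 * t) : ℝ) : ℂ))

lemma phiG_ne_zero {n : ℕ} (t : ℝ) (z : Eucl n) : phiG t z ≠ 0 :=
  Complex.exp_ne_zero _

lemma norm_phiG {n : ℕ} (t : ℝ) (z : Eucl n) : ‖phiG t z‖ = 1 := by
  rw [phiG, Complex.norm_exp,
    show (-Complex.I * ((‖z‖ ^ 2 / (4 * t) : ℝ) : ℂ)).re = 0 by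
      rw [Complex.mul_re]; simp [Complex.div_im, Complex.mul_im, ← Complex.ofReal_pow],
    Real.exp_zero]

/-- The exponent function, with its derivative. -/
lemma hasFDerivAt_exponent {n : ℕ} (t : ℝ) (z : Eucl n) :
    HasFDerivAt (fun w : Eucl n => -Complex.I * ((‖w‖ ^ 2 / (4 * t) : ℝ) : ℂ))
      ((-Complex.I) • (Complex.ofRealCLM.comp ((4 * t)⁻¹ • (2 • (innerSL ℝ z))))) z := by
  have h1 : HasFDerivAt (fun w : Eucl n => ‖w‖ ^ 2) (2 • (innerSL ℝ z)) z := by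
    simpa using (hasFDerivAt_id z).norm_sq
  have h2 : HasFDerivAt (fun w : Eucl n => ‖w‖ ^ 2 / (4 * t))
      ((4 * t)⁻¹ • (2 • (innerSL ℝ z))) z := by
    simpa [div_eq_inv_mul, smul_smul, mul_comm, smul_eq_mul, Pi.smul_def] using h1.const_smul ((4 * t)⁻¹)
  have h3 := Complex.ofRealCLM.hasFDerivAt.comp z h2
  simpa using h3.const_mul (-Complex.I)

lemma contDiff_phiG {n : ℕ} (t : ℝ) : ContDiff ℝ ∞ (phiG (n := n) t) := by
  have h1 : ContDiff ℝ ∞ (fun w : Eucl n => -Complex.I * ((‖w‖ ^ 2 / (4 * t) : ℝ) : ℂ)) := by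
    exact contDiff_const.mul
      (Complex.ofRealCLM.contDiff.comp ((contDiff_norm_sq ℝ).div_const _))
  exact Complex.contDiff_exp.comp h1

lemma pd_phiG {n : ℕ} (t : ℝ) (j : Fin n) (z : Eucl n) :
    pd j (phiG t) z = phiG t z * (-Complex.I * ((z j * (2 * t)⁻¹ : ℝ) : ℂ)) := by
  have h := (hasFDerivAt_exponent t z).cexp
  have hf := h.fderiv
  unfold pd phiG
  rw [hf]
  simp only [ContinuousLinearMap.coe_smul', Pi.smul_apply, ContinuousLinearMap.coe_comp',
    Function.comp_apply, ContinuousLinearMap.smul_apply]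
  have hinner : (innerSL ℝ z) (EuclideanSpace.single j 1) = z j := by
    simp [EuclideanSpace.inner_single_right, real_inner_comm]
  rw [hinner]
  show _ = Complex.exp (-Complex.I * ((‖z‖ ^ 2 / (4 * t) : ℝ) : ℂ)) * _
  by_cases ht : t = 0
  · simp [ht]
  · simp only [Complex.ofRealCLM_apply, smul_eq_mul, nsmul_eq_mul]
    push_cast
    field_simp
    push_cast
    ring

lemma pd_mul {n : ℕ} (j : Fin n) {u v : Eucl n → ℂ} {z : Eucl n}
    (hu : DifferentiableAt ℝ u z) (hv : DifferentiableAt ℝ v z) :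
    pd j (fun w => u w * v w) z = pd j u z * v z + u z * pd j v z := by
  rw [pd, fderiv_fun_mul hu hv]
  simp only [ContinuousLinearMap.add_apply, ContinuousLinearMap.smul_apply, smul_eq_mul, pd]
  ring

lemma Dop_phiG_mul {n : ℕ} (t : ℝ) (j : Fin n) {u : Eucl n → ℂ} {z : Eucl n}
    (hu : DifferentiableAt ℝ u z) :
    Dop j (fun w => phiG t w * u w) z =
      phiG t z * Dop j u z - ((z j * (2 * t)⁻¹ : ℝ) : ℂ) * (phiG t z * u z) := by
  have hφ : DifferentiableAt ℝ (phiG (n := n) t) z :=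
    ((contDiff_phiG t).differentiable (by simp)) z
  rw [Dop, pd_mul j hφ hu, pd_phiG]
  rw [Dop]
  ring_nf
  simp [Complex.I_sq]
  ring

/-- Each generator of `Mgen` preserves smoothness. -/
lemma contDiff_Dop {n : ℕ} (j : Fin n) {u : Eucl n → ℂ} (hu : ContDiff ℝ ∞ u) :
    ContDiff ℝ ∞ (Dop j u) := by
  have hfd : ContDiff ℝ ∞ (fderiv ℝ u) := hu.fderiv_right (le_of_eq rfl)
  have : ContDiff ℝ ∞ (pd j u) := by
    exact (ContinuousLinearMap.apply ℝ ℂ (EuclideanSpace.single j 1)).contDiff.comp hfd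
  exact contDiff_const.mul this

lemma contDiff_coord {n : ℕ} (j : Fin n) :
    ContDiff ℝ ∞ (fun z : Eucl n => ((z j : ℝ) : ℂ)) :=
  Complex.ofRealCLM.contDiff.comp (EuclideanSpace.proj (𝕜 := ℝ) j).contDiff

lemma contDiff_Mgen {n : ℕ} (t : ℝ) (ι : MIdx n) {u : Eucl n → ℂ} (hu : ContDiff ℝ ∞ u) :
    ContDiff ℝ ∞ (Mgen t ι u) := by
  rcases ι with _ | ⟨⟨i, j⟩ | j | j⟩
  · exact hu
  · exact ((contDiff_coord j).mul (contDiff_Dop i hu)).sub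
      ((contDiff_coord i).mul (contDiff_Dop j hu))
  · exact (contDiff_const.mul (contDiff_Dop j hu)).sub ((contDiff_coord j).mul hu)
  · exact contDiff_Dop j hu

/-- The gauge conjugation identity for a single generator. -/
lemma gauge_gen {n : ℕ} {t : ℝ} (ht : t ≠ 0) (ι : MIdx n) {u : Eucl n → ℂ}
    (hu : ContDiff ℝ ∞ u) :
    M0gen t ι (fun z => phiG t z * u z) = fun z => phiG t z * Mgen t ι u z := by
  have hud : ∀ z, DifferentiableAt ℝ u z := fun z => (hu.differentiable (by simp)) z
  have h2t : (2 * (t : ℂ)) ≠ 0 := by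
    simp [ht]
  rcases ι with _ | ⟨⟨i, j⟩ | j | j⟩
  · rfl
  · funext z
    simp only [M0gen, Mgen, Dop_phiG_mul t i (hud z), Dop_phiG_mul t j (hud z)]
    push_cast
    ring
  · funext z
    simp only [M0gen, Mgen, Dop_phiG_mul t j (hud z)]
    have : ((z j * (2 * t)⁻¹ : ℝ) : ℂ) = (z j : ℂ) / (2 * (t : ℂ)) := by
      push_cast; ring
    rw [this]
    have ht' : (t : ℂ) ≠ 0 := by exact_mod_cast ht
    field_simp
  · funext z
    simp only [M0gen, Mgen, Dop_phiG_mul t j (hud z)]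
    have : ((z j * (2 * t)⁻¹ : ℝ) : ℂ) = (z j : ℂ) / (2 * (t : ℂ)) := by
      push_cast; ring
    rw [this]
    ring

lemma applyTuple_zero {X ι : Type*} (gen : ι → (X → ℂ) → (X → ℂ))
    (A : Fin 0 → ι) (u : X → ℂ) : applyTuple gen A u = u := by
  simp [applyTuple]

lemma applyTuple_succ {X ι : Type*} (gen : ι → (X → ℂ) → (X → ℂ)) {k : ℕ}
    (A : Fin (k + 1) → ι) (u : X → ℂ) :
    applyTuple gen A u = gen (A 0) (applyTuple gen (Fin.tail A) u) := by
  simp [applyTuple, List.ofFn_succ, Fin.tail]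

lemma contDiff_applyTuple {n : ℕ} (t : ℝ) {k : ℕ} (A : Fin k → MIdx n)
    {u : Eucl n → ℂ} (hu : ContDiff ℝ ∞ u) :
    ContDiff ℝ ∞ (applyTuple (Mgen t) A u) := by
  induction k with
  | zero => rw [applyTuple_zero]; exact hu
  | succ k ih =>
    rw [applyTuple_succ]
    exact contDiff_Mgen t (A 0) (ih (Fin.tail A))

lemma gauge_tuple {n : ℕ} {t : ℝ} (ht : t ≠ 0) {k : ℕ} (A : Fin k → MIdx n)
    {u : Eucl n → ℂ} (hu : ContDiff ℝ ∞ u) :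
    applyTuple (M0gen t) A (fun z => phiG t z * u z) =
      fun z => phiG t z * applyTuple (Mgen t) A u z := by
  induction k with
  | zero => rw [applyTuple_zero, applyTuple_zero]
  | succ k ih =>
    rw [applyTuple_succ, applyTuple_succ, ih (Fin.tail A)]
    exact gauge_gen ht (A 0) (contDiff_applyTuple t (Fin.tail A) hu)

lemma eLpNorm_phiG_mul {n : ℕ} (t : ℝ) (w : Eucl n → ℂ) :
    eLpNorm (fun z => phiG t z * w z) 2 volume = eLpNorm w 2 volume := by
  apply eLpNorm_congr_norm_ae
  filter_upwards with z
  rw [norm_mul, norm_phiG, one_mul]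

/-- For `|t| ≥ 1/2` and `ũ(z) = e^{-i|z|²/(4t)} u(z)` one has the exact
equality `‖u‖_{W^k_{M_t}} = ‖ũ‖_{W^k_{M_{t,0}}}`. -/
theorem stmt0 (n k : ℕ) (hn : 1 ≤ n) (t : ℝ) (ht : 1/2 ≤ |t|)
    (u : SchwartzMap (Eucl n) ℂ) :
    Wnorm (Mgen t) k ⇑u =
      Wnorm (M0gen t) k
        (fun z => Complex.exp (-Complex.I * ((‖z‖ ^ 2 / (4 * t) : ℝ) : ℂ)) * u z) := by
  have ht0 : t ≠ 0 := by
    intro h; rw [h] at ht; norm_num at ht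
  have hu : ContDiff ℝ ∞ (⇑u) := u.smooth'
  unfold Wnorm
  congr 1
  apply Finset.sum_congr rfl
  intro A _
  have hrw : (fun z : Eucl n =>
      Complex.exp (-Complex.I * ((‖z‖ ^ 2 / (4 * t) : ℝ) : ℂ)) * u z)
      = fun z => phiG t z * u z := rfl
  rw [hrw, gauge_tuple ht0 A hu, eLpNorm_phiG_mul]
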